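/- arXiv:1603.03426 — 3 statements merged into one kernel-verified Lean document; each statement's English description precedes it below -/
import Mathlib

section
/- Let p ∈ (1,∞) with conjugate exponent q and let k ∈ L^p(ℝ;L^q(ℝ)). If the integral operator Int k satisfies Int k (L^p[t,∞)) ⊆ L^p[t,∞) for every t ∈ ℝ, then k(x)(y) = 0 for almost every pair (x,y) with y > x; equivalently, Θ(k)(x) vanishes a.e. on (−∞,0) for almost every x ∈ ℝ, i.e. Θ(k) ∈ L^p(ℝ;L^q(ℝ_+)). -/
open MeasureTheory Complex Filter Topology
open scoped ENNReal NNReal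

noncomputable section

/-- `L^p(ℝ)` with complex values. -/
abbrev LpR (p : ℝ≥0∞) := MeasureTheory.Lp ℂ p (volume : Measure ℝ)

/-- The Bochner space `L^p(ℝ; L^q(ℝ))`. -/
abbrev LpLq (p q : ℝ≥0∞) [Fact (1 ≤ q)] := MeasureTheory.Lp (LpR q) p (volume : Measure ℝ)

/-- `T` is the operator of multiplication by `φ`. -/
def IsMulOp (p : ℝ≥0∞) [Fact (1 ≤ p)] (φ : ℝ → ℂ) (T : LpR p →L[ℂ] LpR p) : Prop :=
  ∀ f : LpR p, (T f : ℝ → ℂ) =ᵐ[volume] fun x => φ x * (f : ℝ → ℂ) x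

/-- `T` is the operator of translation by `μ`: `(T f)(x) = f (x - μ)`. -/
def IsTransOp (p : ℝ≥0∞) [Fact (1 ≤ p)] (μ : ℝ) (T : LpR p →L[ℂ] LpR p) : Prop :=
  ∀ f : LpR p, (T f : ℝ → ℂ) =ᵐ[volume] fun x => (f : ℝ → ℂ) (x - μ)

/-- A set of operators is closed in the strong operator topology (the topology of
pointwise norm convergence) if it contains every operator which is an SOT-limit point. -/
def IsSOTClosed (p : ℝ≥0∞) [Fact (1 ≤ p)] (S : Set (LpR p →L[ℂ] LpR p)) : Prop :=
  ∀ T : LpR p →L[ℂ] LpR p,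
    (⇑T ∈ closure ((fun A : LpR p →L[ℂ] LpR p => (A : LpR p → LpR p)) '' S)) → T ∈ S

/-- The generators of the parabolic algebra: multiplications `M_λ`, `λ ≥ 0`, and
translations `D_μ`, `μ ≥ 0`. -/
def parabolicGens (p : ℝ≥0∞) [Fact (1 ≤ p)] : Set (LpR p →L[ℂ] LpR p) :=
  {T | ∃ l : ℝ, 0 ≤ l ∧ IsMulOp p (fun x => Complex.exp (Complex.I * l * x)) T} ∪
  {T | ∃ m : ℝ, 0 ≤ m ∧ IsTransOp p m T}

/-- The parabolic algebra: the smallest SOT-closed subalgebra of `B(L^p(ℝ))` containing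
the multiplication semigroup and the translation semigroup. -/
def parabolicAlgebra (p : ℝ≥0∞) [Fact (1 ≤ p)] : Set (LpR p →L[ℂ] LpR p) :=
  ⋂₀ {S | parabolicGens p ⊆ S ∧ IsSOTClosed p S ∧
      ∃ A : Subalgebra ℂ (LpR p →L[ℂ] LpR p), (A : Set (LpR p →L[ℂ] LpR p)) = S}

/-- The Hardy space `H^p(ℝ)`, as a subset of `L^p(ℝ)`. -/
def hardy (p : ℝ≥0∞) [Fact (1 ≤ p)] : Set (LpR p) :=
  {f | ∀ u : ℂ, 0 < u.im → ∫ x : ℝ, (f : ℝ → ℂ) x / ((x : ℂ) + u) = 0}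

/-- `L^p[t,∞)`, the subspace of functions vanishing a.e. on `(-∞, t)`. -/
def LpHalfLine (p : ℝ≥0∞) [Fact (1 ≤ p)] (t : ℝ) : Set (LpR p) :=
  {f | ∀ᵐ x : ℝ, x < t → (f : ℝ → ℂ) x = 0}

/-- The image of the Hardy space under multiplication by the function `φ`. -/
def mulHardy (p : ℝ≥0∞) [Fact (1 ≤ p)] (φ : ℝ → ℂ) : Set (LpR p) :=
  {g | ∃ f ∈ hardy p, (g : ℝ → ℂ) =ᵐ[volume] fun x => φ x * (f : ℝ → ℂ) x}

/-- The Fourier binest algebra: operators leaving invariant each `L^p[t,∞)` and each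
`e^{iλx}H^p(ℝ)`. -/
def fourierBinest (p : ℝ≥0∞) [Fact (1 ≤ p)] : Set (LpR p →L[ℂ] LpR p) :=
  {T | (∀ t : ℝ, ∀ f ∈ LpHalfLine p t, T f ∈ LpHalfLine p t) ∧
       (∀ l : ℝ, ∀ f ∈ mulHardy p (fun x => Complex.exp (Complex.I * l * x)),
          T f ∈ mulHardy p (fun x => Complex.exp (Complex.I * l * x)))}

/-- `T` is the `(p,q)`-integral operator with kernel `k`. -/
def IsIntOp (p q : ℝ≥0∞) [Fact (1 ≤ p)] [Fact (1 ≤ q)] (k : LpLq p q)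
    (T : LpR p →L[ℂ] LpR p) : Prop :=
  ∀ f : LpR p, (T f : ℝ → ℂ) =ᵐ[volume]
    fun x => ∫ y : ℝ, ((k : ℝ → LpR q) x : ℝ → ℂ) y * (f : ℝ → ℂ) y

/-- `G^p`, the set of `(p,q)`-integral operators on `L^p(ℝ)`. -/
def Gp (p q : ℝ≥0∞) [Fact (1 ≤ p)] [Fact (1 ≤ q)] : Set (LpR p →L[ℂ] LpR p) :=
  {T | ∃ k : LpLq p q, IsIntOp p q k T}


/-- If the integral operator `Int k` leaves each `L^p[t,∞)` invariant,
then `k(x)(y) = 0` for almost every pair `(x,y)` with `y > x`. -/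
theorem kernel_supported_below_diagonal
    (p q : ℝ≥0∞) [Fact (1 ≤ p)] [Fact (1 ≤ q)]
    (hp : 1 < p) (hp' : p ≠ ⊤) (hq : 1 < q) (hq' : q ≠ ⊤)
    (hpq : 1 / p + 1 / q = 1)
    (k : LpLq p q) (T : LpR p →L[ℂ] LpR p) (hT : IsIntOp p q k T)
    (hinv : ∀ t : ℝ, ∀ f ∈ LpHalfLine p t, T f ∈ LpHalfLine p t) :
    ∀ᵐ x : ℝ, ∀ᵐ y : ℝ, x < y → ((k : ℝ → LpR q) x : ℝ → ℂ) y = 0 := by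
  set K : ℝ → ℝ → ℂ := fun x => ((k : ℝ → LpR q) x : ℝ → ℂ) with hKdef
  have key : ∀ a b : ℚ, ∀ᵐ x : ℝ, x < (a : ℝ) → ∫ t in Set.Icc (a : ℝ) (b : ℝ), K x t = 0 := by
    intro a b
    set s : Set ℝ := Set.Icc (a : ℝ) (b : ℝ) with hs_def
    have hs : MeasurableSet s := measurableSet_Icc
    have hμs : volume s ≠ ∞ := (isCompact_Icc.measure_lt_top).ne
    set f : LpR p := indicatorConstLp p hs hμs (1 : ℂ) with hf_def
    have hcoe : (f : ℝ → ℂ) =ᵐ[volume] s.indicator fun _ => (1 : ℂ) := indicatorConstLp_coeFn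
    have h1 : f ∈ LpHalfLine p (a : ℝ) := by
      filter_upwards [hcoe] with x hx hxa
      rw [hx]
      exact Set.indicator_of_notMem (fun hxs => absurd hxs.1 (by linarith)) _
    have h2 := hinv (a : ℝ) f h1
    have h3 := hT f
    filter_upwards [h2, h3] with x hx2 hx3 hxa
    have e1 : ∫ y : ℝ, K x y * (f : ℝ → ℂ) y
        = ∫ y : ℝ, K x y * s.indicator (fun _ => (1 : ℂ)) y :=
      integral_congr_ae (hcoe.mono fun y hy => by dsimp only; rw [hy])
    have e2 : (fun y => K x y * s.indicator (fun _ => (1 : ℂ)) y) = s.indicator (K x) := by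
      funext y
      by_cases hy : y ∈ s <;> simp [hy]
    rw [← integral_indicator hs, ← e2, ← e1, ← hx3]
    exact hx2 hxa
  have H : ∀ᵐ x : ℝ, ∀ a b : ℚ, x < (a : ℝ) → ∫ t in Set.Icc (a : ℝ) (b : ℝ), K x t = 0 := by
    rw [ae_all_iff]
    intro a
    rw [ae_all_iff]
    intro b
    exact key a b
  filter_upwards [H] with x hx
  set g : ℝ → ℂ := K x with hg_def
  have hmem : MemLp g q volume := Lp.memLp _
  have hloc : LocallyIntegrable g volume := hmem.locallyIntegrable hq.le
  have hInt : ∀ a b : ℝ, IntervalIntegrable g volume a b := fun a b =>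
    (hloc.integrableOn_isCompact isCompact_uIcc).intervalIntegrable
  have hF0 : ∀ (a : ℚ), x < (a : ℝ) → ∀ b : ℝ, (a : ℝ) ≤ b → ∫ t in (a : ℝ)..b, g t = 0 := by
    intro a ha
    have hcont : Continuous fun b => ∫ t in (a : ℝ)..b, g t :=
      intervalIntegral.continuous_primitive (fun _ _ => hInt _ _) _
    have hrat : ∀ r : ℚ, (a : ℝ) ≤ (r : ℝ) → ∫ t in (a : ℝ)..(r : ℝ), g t = 0 := by
      intro r har
      rw [intervalIntegral.integral_of_le har, ← integral_Icc_eq_integral_Ioc]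
      exact hx a r ha
    intro b hb
    -- choose rationals rₙ ∈ (b, b + 1/(n+1))
    have hex : ∀ n : ℕ, ∃ r : ℚ, b < (r : ℝ) ∧ (r : ℝ) < b + 1 / (n + 1) := by
      intro n
      obtain ⟨r, hr1, hr2⟩ := exists_rat_btwn (lt_add_of_pos_right b (show (0:ℝ) < 1 / (n + 1 : ℝ) by positivity))
      exact ⟨r, hr1, hr2⟩
    choose u hu1 hu2 using hex
    have hu_tendsto : Tendsto (fun n => ((u n : ℝ))) atTop (𝓝 b) := by
      have h1 : Tendsto (fun n : ℕ => b + 1 / (n + 1 : ℝ)) atTop (𝓝 (b + 0)) :=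
        tendsto_const_nhds.add (tendsto_one_div_add_atTop_nhds_zero_nat)
      rw [add_zero] at h1
      exact tendsto_of_tendsto_of_tendsto_of_le_of_le tendsto_const_nhds h1
        (fun n => (hu1 n).le) (fun n => (hu2 n).le)
    have hzero : Tendsto (fun n : ℕ => ∫ t in (a : ℝ)..(u n : ℝ), g t) atTop
        (𝓝 (∫ t in (a : ℝ)..b, g t)) := (hcont.tendsto b).comp hu_tendsto
    have heq : (fun n : ℕ => ∫ t in (a : ℝ)..(u n : ℝ), g t) = fun _ => (0 : ℂ) := by
      funext n
      exact hrat (u n) (hb.trans (hu1 n).le)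
    rw [heq] at hzero
    exact (tendsto_nhds_unique hzero tendsto_const_nhds).symm ▸ rfl
  have hdiff := (IsUnifLocDoublingMeasure.vitaliFamily (volume : Measure ℝ) 1).ae_tendsto_average hloc
  filter_upwards [hdiff] with y hy hxy
  have h1 : Tendsto (fun b => ⨍ t in Set.Icc b y, g t) (𝓝[<] y) (𝓝 (g y)) :=
    hy.comp (Real.tendsto_Icc_vitaliFamily_left y)
  obtain ⟨a, hxa, hay⟩ := exists_rat_btwn hxy
  have h2 : ∀ᶠ b in 𝓝[<] y, ⨍ t in Set.Icc b y, g t = 0 := by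
    filter_upwards [Ioo_mem_nhdsLT_of_mem (show y ∈ Set.Ioc (a : ℝ) y from ⟨hay, le_refl y⟩)]
      with b hb
    have hib : ∫ t in Set.Icc b y, g t = 0 := by
      rw [integral_Icc_eq_integral_Ioc, ← intervalIntegral.integral_of_le hb.2.le,
        ← intervalIntegral.integral_interval_sub_left (hInt (a : ℝ) y) (hInt (a : ℝ) b)]
      rw [hF0 a hxa y (hay.le.trans (le_refl y)), hF0 a hxa b hb.1.le, sub_zero]
    rw [setAverage_eq, hib, smul_zero]
  haveI : (𝓝[<] y).NeBot := nhdsLT_neBot y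
  have h3 : Tendsto (fun _ : ℝ => (0 : ℂ)) (𝓝[<] y) (𝓝 (g y)) :=
    h1.congr' (h2.mono fun b hb => hb)
  exact (tendsto_nhds_unique h3 tendsto_const_nhds)


end
end

section
/- Let φ ∈ L¹(ℝ) and p ∈ [1,∞). Then the convolution operator Δ_φ f = φ * f is bounded on L^p(ℝ) with ‖Δ_φ‖ ≤ ‖φ‖_1. Moreover, if φ has essential support contained in [0,∞), then Δ_φ belongs to the closure in the strong operator topology of the algebra generated by the translation operators {D_t : t ≥ 0}. -/
open MeasureTheory Complex Filter Topology
open scoped ENNReal NNReal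

noncomputable section

/-! ### Auxiliary development -/

section Aux

variable (p : ℝ≥0∞) [Fact (1 ≤ p)]

/-- The translation operator `D_t` on `L^p(ℝ)`. -/
def transOp (t : ℝ) : LpR p →L[ℂ] LpR p :=
  LinearMap.mkContinuous
    { toFun := fun f => MeasureTheory.Lp.compMeasurePreserving (fun x => x - t)
        (measurePreserving_sub_right volume t) f
      map_add' := fun f g => map_add _ f g
      map_smul' := fun c f => by
        apply MeasureTheory.Lp.ext
        have hqm : Measure.QuasiMeasurePreserving (fun x : ℝ => x - t) volume volume :=
          (measurePreserving_sub_right volume t).quasiMeasurePreserving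
        have h1 := MeasureTheory.Lp.coeFn_compMeasurePreserving (μ := volume) (c • f)
          (measurePreserving_sub_right volume t)
        have h2 := MeasureTheory.Lp.coeFn_compMeasurePreserving (μ := volume) f
          (measurePreserving_sub_right volume t)
        have h3 : ⇑(c • f) =ᵐ[volume] c • ⇑f := MeasureTheory.Lp.coeFn_smul c f
        have h4 : ⇑(c • f) ∘ (fun x : ℝ => x - t)
            =ᵐ[volume] (c • ⇑f) ∘ (fun x : ℝ => x - t) := hqm.ae_eq h3
        have h5 : ⇑(c • (MeasureTheory.Lp.compMeasurePreserving (μ := volume)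
              (fun x : ℝ => x - t) (measurePreserving_sub_right volume t) f))
            =ᵐ[volume] c • ⇑(MeasureTheory.Lp.compMeasurePreserving (μ := volume)
              (fun x : ℝ => x - t) (measurePreserving_sub_right volume t) f) :=
          MeasureTheory.Lp.coeFn_smul c _
        refine h1.trans (h4.trans ?_) |>.trans h5.symm
        filter_upwards [h2] with x hx
        simp only [Function.comp_apply, Pi.smul_apply]
        rw [hx]
        rfl }
    1 (fun f => by
      simpa using (MeasureTheory.Lp.norm_compMeasurePreserving f
        (measurePreserving_sub_right volume t)).le)

theorem transOp_coeFn (t : ℝ) (f : LpR p) :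
    ⇑(transOp p t f) =ᵐ[volume] fun x => (f : ℝ → ℂ) (x - t) :=
  MeasureTheory.Lp.coeFn_compMeasurePreserving f (measurePreserving_sub_right volume t)

theorem isTransOp_transOp (t : ℝ) : IsTransOp p t (transOp p t) :=
  fun f => transOp_coeFn p t f

theorem norm_transOp_apply (t : ℝ) (f : LpR p) : ‖transOp p t f‖ = ‖f‖ :=
  MeasureTheory.Lp.norm_compMeasurePreserving f (measurePreserving_sub_right volume t)

theorem continuous_transOp_apply (hp' : p ≠ ⊤) (f : LpR p) :
    Continuous fun t : ℝ => transOp p t f := by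
  rw [continuous_iff_continuousAt]
  intro t₀
  have hg : Continuous fun t : ℝ => ContinuousMap.id ℝ - ContinuousMap.const ℝ t :=
    continuous_const.sub ContinuousMap.continuous_const'
  exact Filter.Tendsto.compMeasurePreservingLp (f := fun _ : ℝ => f)
    (g := fun t : ℝ => ContinuousMap.id ℝ - ContinuousMap.const ℝ t)
    tendsto_const_nhds (hg.tendsto t₀)
    (fun t => measurePreserving_sub_right volume t)
    (measurePreserving_sub_right volume t₀) hp'

theorem integrable_convIntegrand (hp' : p ≠ ⊤) {φ : ℝ → ℂ}
    (hφ : MeasureTheory.Integrable φ (volume : Measure ℝ)) (f : LpR p) :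
    MeasureTheory.Integrable (fun y => φ y • transOp p y f) (volume : Measure ℝ) := by
  refine MeasureTheory.Integrable.mono' (hφ.norm.mul_const ‖f‖)
    (hφ.aestronglyMeasurable.smul
      (continuous_transOp_apply p hp' f).aestronglyMeasurable) ?_
  filter_upwards with y
  rw [norm_smul, norm_transOp_apply]

/-- The convolution operator, as a linear map. -/
def convOpLin (hp' : p ≠ ⊤) {φ : ℝ → ℂ}
    (hφ : MeasureTheory.Integrable φ (volume : Measure ℝ)) : LpR p →ₗ[ℂ] LpR p where
  toFun f := ∫ y : ℝ, φ y • transOp p y f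
  map_add' f g := by
    have h : ∀ y : ℝ, φ y • transOp p y (f + g)
        = φ y • transOp p y f + φ y • transOp p y g := by
      intro y; rw [map_add, smul_add]
    simp only [h]
    exact MeasureTheory.integral_add (integrable_convIntegrand p hp' hφ f)
      (integrable_convIntegrand p hp' hφ g)
  map_smul' c f := by
    have h : ∀ y : ℝ, φ y • transOp p y (c • f) = c • (φ y • transOp p y f) := by
      intro y; rw [_root_.map_smul, smul_comm]
    simp only [h, RingHom.id_apply]
    exact MeasureTheory.integral_smul c _

theorem convOpLin_norm_le (hp' : p ≠ ⊤) {φ : ℝ → ℂ}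
    (hφ : MeasureTheory.Integrable φ (volume : Measure ℝ)) (f : LpR p) :
    ‖convOpLin p hp' hφ f‖ ≤ (∫ y : ℝ, ‖φ y‖) * ‖f‖ := by
  refine (MeasureTheory.norm_integral_le_integral_norm _).trans ?_
  have h : ∀ y : ℝ, ‖φ y • transOp p y f‖ = ‖φ y‖ * ‖f‖ := fun y => by
    rw [norm_smul, norm_transOp_apply]
  rw [MeasureTheory.integral_congr_ae (Filter.Eventually.of_forall h),
    MeasureTheory.integral_mul_const]

/-- The convolution operator `Δ_φ` on `L^p(ℝ)`. -/
def convOp (hp' : p ≠ ⊤) {φ : ℝ → ℂ}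
    (hφ : MeasureTheory.Integrable φ (volume : Measure ℝ)) : LpR p →L[ℂ] LpR p :=
  LinearMap.mkContinuous (convOpLin p hp' hφ) (∫ y : ℝ, ‖φ y‖)
    (convOpLin_norm_le p hp' hφ)

theorem convOp_apply (hp' : p ≠ ⊤) {φ : ℝ → ℂ}
    (hφ : MeasureTheory.Integrable φ (volume : Measure ℝ)) (f : LpR p) :
    convOp p hp' hφ f = ∫ y : ℝ, φ y • transOp p y f := rfl

theorem norm_convOp_le (hp' : p ≠ ⊤) {φ : ℝ → ℂ}
    (hφ : MeasureTheory.Integrable φ (volume : Measure ℝ)) :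
    ‖convOp p hp' hφ‖ ≤ ∫ y : ℝ, ‖φ y‖ :=
  LinearMap.mkContinuous_norm_le _ (MeasureTheory.integral_nonneg fun y => norm_nonneg _) _

theorem lp_integrableOn (g : LpR p) {s : Set ℝ} (hμs : volume s < ⊤) :
    MeasureTheory.IntegrableOn (⇑g) s volume := by
  haveI : IsFiniteMeasure (volume.restrict s) :=
    ⟨by rw [Measure.restrict_apply_univ]; exact hμs⟩
  exact ((MeasureTheory.Lp.memLp g).restrict s).integrable Fact.out

theorem lp_setIntegral_norm_le (hp' : p ≠ ⊤) (g : LpR p) {s : Set ℝ}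
    (hμs : volume s < ⊤) :
    ∫ x in s, ‖(g : ℝ → ℂ) x‖ ≤ (volume s ^ (1 - 1 / p.toReal)).toReal * ‖g‖ := by
  have hmeas : AEStronglyMeasurable (⇑g) (volume.restrict s) :=
    (MeasureTheory.Lp.aestronglyMeasurable g).restrict
  have hexp : (0 : ℝ) ≤ 1 - 1 / p.toReal := by
    have h1 : (1 : ℝ) ≤ p.toReal := by
      have := ENNReal.toReal_mono hp' (Fact.out : (1 : ℝ≥0∞) ≤ p)
      simpa using this
    have : 1 / p.toReal ≤ 1 := by
      rw [div_le_one (by linarith)]; linarith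
    linarith
  have h1 : eLpNorm (⇑g) 1 (volume.restrict s)
      ≤ eLpNorm (⇑g) p (volume.restrict s)
        * (volume.restrict s) Set.univ ^ (1 / (1 : ℝ≥0∞).toReal - 1 / p.toReal) :=
    eLpNorm_le_eLpNorm_mul_rpow_measure_univ Fact.out hmeas
  rw [Measure.restrict_apply_univ] at h1
  simp only [ENNReal.toReal_one, div_one] at h1
  have h2 : eLpNorm (⇑g) p (volume.restrict s) ≤ eLpNorm (⇑g) p volume :=
    eLpNorm_mono_measure _ Measure.restrict_le_self
  have h3 : eLpNorm (⇑g) 1 (volume.restrict s)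
      ≤ eLpNorm (⇑g) p volume * volume s ^ (1 - 1 / p.toReal) :=
    h1.trans (mul_le_mul_left h2 _)
  have hfin : eLpNorm (⇑g) p volume * volume s ^ (1 - 1 / p.toReal) ≠ ⊤ :=
    ENNReal.mul_ne_top (MeasureTheory.Lp.eLpNorm_ne_top g)
      (ENNReal.rpow_lt_top_of_nonneg hexp hμs.ne).ne
  have h4 := ENNReal.toReal_mono hfin h3
  rw [ENNReal.toReal_mul] at h4
  calc ∫ x in s, ‖(g : ℝ → ℂ) x‖
      = (eLpNorm (⇑g) 1 (volume.restrict s)).toReal := by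
        rw [MeasureTheory.eLpNorm_one_eq_lintegral_enorm,
          MeasureTheory.integral_norm_eq_lintegral_enorm hmeas]
    _ ≤ (eLpNorm (⇑g) p volume).toReal * (volume s ^ (1 - 1 / p.toReal)).toReal := h4
    _ = (volume s ^ (1 - 1 / p.toReal)).toReal * ‖g‖ := by
        rw [MeasureTheory.Lp.norm_def]; ring

/-- Integration over a finite-measure set, as a continuous linear functional on `L^p`. -/
def setIntegralCLM (hp' : p ≠ ⊤) {s : Set ℝ} (hμs : volume s < ⊤) :
    LpR p →L[ℂ] ℂ :=
  LinearMap.mkContinuous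
    { toFun := fun g => ∫ x in s, (g : ℝ → ℂ) x
      map_add' := fun f g => by
        show (∫ x in s, ((f + g : LpR p) : ℝ → ℂ) x)
          = (∫ x in s, (f : ℝ → ℂ) x) + ∫ x in s, (g : ℝ → ℂ) x
        rw [MeasureTheory.integral_congr_ae
          (MeasureTheory.ae_restrict_of_ae (MeasureTheory.Lp.coeFn_add f g))]
        exact MeasureTheory.integral_add (lp_integrableOn p f hμs)
          (lp_integrableOn p g hμs)
      map_smul' := fun c f => by
        show (∫ x in s, ((c • f : LpR p) : ℝ → ℂ) x) = c • ∫ x in s, (f : ℝ → ℂ) x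
        rw [MeasureTheory.integral_congr_ae
          (MeasureTheory.ae_restrict_of_ae (MeasureTheory.Lp.coeFn_smul c f))]
        exact MeasureTheory.integral_smul c _ }
    ((volume s ^ (1 - 1 / p.toReal)).toReal)
    (fun g => (MeasureTheory.norm_integral_le_integral_norm _).trans
      (lp_setIntegral_norm_le p hp' g hμs))

theorem setIntegralCLM_apply (hp' : p ≠ ⊤) {s : Set ℝ} (hμs : volume s < ⊤)
    (g : LpR p) : setIntegralCLM p hp' hμs g = ∫ x in s, (g : ℝ → ℂ) x := rfl

theorem convKernel_integrable (hp' : p ≠ ⊤) {φ : ℝ → ℂ}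
    (hφ : MeasureTheory.Integrable φ (volume : Measure ℝ)) (f : LpR p)
    {s : Set ℝ} (hμs : volume s < ⊤) :
    MeasureTheory.Integrable (fun z : ℝ × ℝ => φ z.2 * (f : ℝ → ℂ) (z.1 - z.2))
      ((volume.restrict s).prod volume) := by
  have hmeas : AEStronglyMeasurable (fun z : ℝ × ℝ => φ z.2 * (f : ℝ → ℂ) (z.1 - z.2))
      ((volume.restrict s).prod volume) := by
    refine AEStronglyMeasurable.mul ?_ ?_
    · exact (hφ.aestronglyMeasurable.comp_quasiMeasurePreserving
        Measure.quasiMeasurePreserving_snd)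
    · exact ((MeasureTheory.Lp.stronglyMeasurable f).comp_measurable
        (measurable_fst.sub measurable_snd)).aestronglyMeasurable
  rw [MeasureTheory.integrable_prod_iff' hmeas]
  constructor
  · refine Filter.Eventually.of_forall fun y => ?_
    have he : (fun x => (f : ℝ → ℂ) (x - y))
        =ᵐ[volume.restrict s] ⇑(transOp p y f) :=
      MeasureTheory.ae_restrict_of_ae (transOp_coeFn p y f).symm
    exact ((lp_integrableOn p (transOp p y f) hμs).congr he.symm).const_mul (φ y)
  · have hbd : ∀ y : ℝ, ∫ x in s, ‖φ y * (f : ℝ → ℂ) (x - y)‖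
        ≤ ‖φ y‖ * ((volume s ^ (1 - 1 / p.toReal)).toReal * ‖f‖) := by
      intro y
      have h1 : (fun x => ‖φ y * (f : ℝ → ℂ) (x - y)‖)
          =ᵐ[volume.restrict s] fun x => ‖φ y‖ * ‖(transOp p y f : ℝ → ℂ) x‖ := by
        filter_upwards [MeasureTheory.ae_restrict_of_ae (transOp_coeFn p y f)] with x hx
        rw [hx, norm_mul]
      rw [MeasureTheory.integral_congr_ae h1, MeasureTheory.integral_const_mul]
      have h2 := lp_setIntegral_norm_le p hp' (transOp p y f) hμs
      rw [norm_transOp_apply] at h2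
      exact mul_le_mul_of_nonneg_left h2 (norm_nonneg _)
    refine MeasureTheory.Integrable.mono'
      (hφ.norm.mul_const ((volume s ^ (1 - 1 / p.toReal)).toReal * ‖f‖))
      ((hmeas.norm.prod_swap).integral_prod_right') ?_
    refine Filter.Eventually.of_forall fun y => ?_
    rw [Real.norm_of_nonneg (MeasureTheory.integral_nonneg fun x => norm_nonneg _)]
    exact hbd y

theorem convOp_coeFn (hp' : p ≠ ⊤) {φ : ℝ → ℂ}
    (hφ : MeasureTheory.Integrable φ (volume : Measure ℝ)) (f : LpR p) :
    ⇑(convOp p hp' hφ f) =ᵐ[volume]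
      fun x => ∫ y : ℝ, φ y * (f : ℝ → ℂ) (x - y) := by
  refine MeasureTheory.ae_eq_of_forall_setIntegral_eq_of_sigmaFinite
    (fun s hs hμs => lp_integrableOn p _ hμs) (fun s hs hμs => ?_) (fun s hs hμs => ?_)
  · exact (convKernel_integrable p hp' hφ f hμs).integral_prod_left
  · -- set integrals agree
    have key : setIntegralCLM p hp' hμs (convOp p hp' hφ f)
        = ∫ y : ℝ, setIntegralCLM p hp' hμs (φ y • transOp p y f) := by
      rw [convOp_apply]
      exact (ContinuousLinearMap.integral_comp_comm _
        (integrable_convIntegrand p hp' hφ f)).symm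
    rw [← setIntegralCLM_apply p hp' hμs, key]
    have step1 : ∀ y : ℝ, setIntegralCLM p hp' hμs (φ y • transOp p y f)
        = ∫ x in s, φ y * (f : ℝ → ℂ) (x - y) := by
      intro y
      rw [_root_.map_smul, smul_eq_mul, setIntegralCLM_apply, ← MeasureTheory.integral_const_mul]
      refine MeasureTheory.integral_congr_ae ?_
      filter_upwards [MeasureTheory.ae_restrict_of_ae (transOp_coeFn p y f)] with x hx
      rw [hx]
    simp only [step1]
    exact (MeasureTheory.integral_integral_swap
      (f := fun x y => φ y * (f : ℝ → ℂ) (x - y))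
      (convKernel_integrable p hp' hφ f hμs)).symm

/-- The Bochner integral of an integrable function which lies a.e. in a closed submodule
belongs to that submodule. -/
theorem integral_mem_of_ae_mem {E : Type*} [NormedAddCommGroup E] [NormedSpace ℂ E]
    [CompleteSpace E] {μ : Measure ℝ} {G : ℝ → E}
    (hG : MeasureTheory.Integrable G μ) (M : Submodule ℂ E)
    (hMc : IsClosed (M : Set E)) (h : ∀ᵐ y ∂μ, G y ∈ M) : (∫ y, G y ∂μ) ∈ M := by
  haveI : IsClosed (M : Set E) := hMc
  let Q : E →L[ℂ] (E ⧸ M) := LinearMap.mkContinuous M.mkQ 1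
    (fun x => by simpa using Submodule.Quotient.norm_mk_le M x)
  have hQ : ∀ x : E, Q x = Submodule.Quotient.mk x := fun x => rfl
  have h0 : ∀ᵐ y ∂μ, Q (G y) = 0 := by
    filter_upwards [h] with y hy
    rw [hQ, Submodule.Quotient.mk_eq_zero]
    exact hy
  have hint : Q (∫ y, G y ∂μ) = 0 := by
    rw [← ContinuousLinearMap.integral_comp_comm Q hG,
      MeasureTheory.integral_congr_ae h0, MeasureTheory.integral_zero]
  rw [hQ, Submodule.Quotient.mk_eq_zero] at hint
  exact hint

theorem convOp_finset_approx (hp' : p ≠ ⊤) {φ : ℝ → ℂ}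
    (hφ : MeasureTheory.Integrable φ (volume : Measure ℝ))
    (hsupp : ∀ᵐ y : ℝ, y < 0 → φ y = 0) (I : Finset (LpR p)) {ε : ℝ} (hε : 0 < ε) :
    ∃ A ∈ (Algebra.adjoin ℂ {S : LpR p →L[ℂ] LpR p | ∃ t : ℝ, 0 ≤ t ∧ IsTransOp p t S}),
      ∀ f ∈ I, ‖A f - convOp p hp' hφ f‖ < ε := by
  classical
  set 𝒜 := Algebra.adjoin ℂ {S : LpR p →L[ℂ] LpR p | ∃ t : ℝ, 0 ≤ t ∧ IsTransOp p t S}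
  -- work in the finite product space
  let E := ∀ _ : {x // x ∈ I}, LpR p
  let Ψ : (LpR p →L[ℂ] LpR p) →ₗ[ℂ] E :=
    { toFun := fun A => fun f => A f.1
      map_add' := fun A B => rfl
      map_smul' := fun c A => rfl }
  let M := (Submodule.map Ψ (Subalgebra.toSubmodule 𝒜)).topologicalClosure
  let G : ℝ → E := fun y => φ y • fun f : {x // x ∈ I} => transOp p y f.1
  let v₀ : E := fun f => f.1
  have hGnorm : ∀ y : ℝ, ‖G y‖ ≤ ‖φ y‖ * ‖v₀‖ := by
    intro y
    rw [norm_smul]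
    refine mul_le_mul_of_nonneg_left ?_ (norm_nonneg _)
    refine (pi_norm_le_iff_of_nonneg (norm_nonneg v₀)).2 fun f => ?_
    rw [norm_transOp_apply]
    exact norm_le_pi_norm v₀ f
  haveI : SecondCountableTopologyEither ℝ E := ⟨Or.inl inferInstance⟩
  have hGmeas : AEStronglyMeasurable G (volume : Measure ℝ) := by
    refine hφ.aestronglyMeasurable.smul ?_
    exact (continuous_pi fun f : {x // x ∈ I} =>
      continuous_transOp_apply p hp' f.1).aestronglyMeasurable
  have hGint : MeasureTheory.Integrable G (volume : Measure ℝ) := by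
    refine MeasureTheory.Integrable.mono' (hφ.norm.mul_const ‖v₀‖) hGmeas ?_
    exact Filter.Eventually.of_forall hGnorm
  have hGmem : ∀ᵐ y : ℝ, G y ∈ M := by
    filter_upwards [hsupp] with y hy
    rcases le_or_gt 0 y with h0y | h0y
    · refine Submodule.le_topologicalClosure _ ?_
      refine Submodule.smul_mem _ (φ y) ?_
      exact Submodule.mem_map_of_mem ((Subalgebra.mem_toSubmodule 𝒜).2
        (Algebra.subset_adjoin ⟨y, h0y, isTransOp_transOp p y⟩))
    · have hz : G y = 0 := by
        have : φ y = 0 := hy h0y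
        simp only [G, this, zero_smul]
      rw [hz]
      exact Submodule.zero_mem M
  have hvint : (∫ y : ℝ, G y) ∈ M :=
    integral_mem_of_ae_mem hGint M (Submodule.isClosed_topologicalClosure _) hGmem
  have hvcomp : (∫ y : ℝ, G y) = fun f : {x // x ∈ I} => convOp p hp' hφ f.1 := by
    funext f
    have h := ContinuousLinearMap.integral_comp_comm
      (ContinuousLinearMap.proj (R := ℂ) (φ := fun _ : {x // x ∈ I} => LpR p) f) hGint
    have h2 : (∫ x : ℝ, (ContinuousLinearMap.proj (R := ℂ)
          (φ := fun _ : {x // x ∈ I} => LpR p) f) (G x))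
        = ∫ x : ℝ, φ x • transOp p x f.1 := by
      refine MeasureTheory.integral_congr_ae (Filter.Eventually.of_forall fun x => ?_)
      simp only [G, ContinuousLinearMap.proj_apply, Pi.smul_apply]
    calc (∫ y : ℝ, G y) f
        = (ContinuousLinearMap.proj (R := ℂ)
            (φ := fun _ : {x // x ∈ I} => LpR p) f) (∫ y : ℝ, G y) := rfl
      _ = ∫ x : ℝ, (ContinuousLinearMap.proj (R := ℂ)
            (φ := fun _ : {x // x ∈ I} => LpR p) f) (G x) := h.symm
      _ = ∫ x : ℝ, φ x • transOp p x f.1 := h2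
      _ = convOp p hp' hφ f.1 := (convOp_apply p hp' hφ f.1).symm
  rw [hvcomp] at hvint
  have hclos : (fun f : {x // x ∈ I} => convOp p hp' hφ f.1)
      ∈ closure ((Submodule.map Ψ (Subalgebra.toSubmodule 𝒜)) : Set E) := by
    rw [← Submodule.topologicalClosure_coe]
    exact hvint
  rcases Metric.mem_closure_iff.1 hclos ε hε with ⟨b, hb, hdist⟩
  rcases hb with ⟨A, hA, rfl⟩
  refine ⟨A, (Subalgebra.mem_toSubmodule 𝒜).1 hA, fun f hf => ?_⟩
  have h1 : ‖A f - convOp p hp' hφ f‖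
      ≤ ‖Ψ A - fun f : {x // x ∈ I} => convOp p hp' hφ f.1‖ := by
    have := norm_le_pi_norm (Ψ A - fun f : {x // x ∈ I} => convOp p hp' hφ f.1) ⟨f, hf⟩
    exact this
  refine h1.trans_lt ?_
  rw [← dist_eq_norm]
  exact dist_comm (α := E) _ _ ▸ hdist

theorem convOp_mem_closure (hp' : p ≠ ⊤) {φ : ℝ → ℂ}
    (hφ : MeasureTheory.Integrable φ (volume : Measure ℝ))
    (hsupp : ∀ᵐ y : ℝ, y < 0 → φ y = 0) :
    ⇑(convOp p hp' hφ) ∈ closure ((fun A : LpR p →L[ℂ] LpR p => (A : LpR p → LpR p)) ''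
      ((Algebra.adjoin ℂ {S : LpR p →L[ℂ] LpR p | ∃ t : ℝ, 0 ≤ t ∧ IsTransOp p t S} :
        Subalgebra ℂ (LpR p →L[ℂ] LpR p)) : Set (LpR p →L[ℂ] LpR p))) := by
  classical
  rw [mem_closure_iff_nhds]
  intro t ht
  rw [nhds_pi] at ht
  rcases Filter.mem_pi.1 ht with ⟨I, hIfin, V, hV, hsub⟩
  have hball : ∀ f : LpR p, ∃ e : ℝ, 0 < e ∧
      Metric.ball (convOp p hp' hφ f) e ⊆ V f := by
    intro f
    rcases Metric.mem_nhds_iff.1 (hV f) with ⟨e, he, hsubs⟩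
    exact ⟨e, he, hsubs⟩
  choose e he hbs using hball
  set J := hIfin.toFinset with hJ
  by_cases hJne : J.Nonempty
  · set ε := J.inf' hJne e with hε
    have hεpos : 0 < ε := (Finset.lt_inf'_iff hJne).2 fun f _ => he f
    rcases convOp_finset_approx p hp' hφ hsupp J hεpos with ⟨A, hA, hAf⟩
    refine ⟨⇑A, ?_, ⟨A, hA, rfl⟩⟩
    refine hsub fun f hf => ?_
    have hfJ : f ∈ J := hIfin.mem_toFinset.2 hf
    refine hbs f ?_
    rw [Metric.mem_ball, dist_eq_norm]
    exact lt_of_lt_of_le (hAf f hfJ) (Finset.inf'_le e hfJ)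
  · -- `I` is empty
    have hIempty : I = ∅ := by
      by_contra hne
      exact hJne (hIfin.toFinset_nonempty.2 (Set.nonempty_iff_ne_empty.2 hne))
    refine ⟨⇑(0 : LpR p →L[ℂ] LpR p), ?_, ⟨0, Subalgebra.zero_mem _, rfl⟩⟩
    refine hsub ?_
    rw [hIempty]
    simp

end Aux

/-- For `φ ∈ L¹(ℝ)` and `p ∈ [1,∞)`, the convolution operator
`Δ_φ f = φ * f` is bounded on `L^p(ℝ)` with `‖Δ_φ‖ ≤ ‖φ‖₁`; moreover, if `φ` is essentially
supported in `[0,∞)`, then `Δ_φ` lies in the SOT-closure of the algebra generated by the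
translations `{D_t : t ≥ 0}`. -/
theorem convolution_operator_bounded_and_in_translation_algebra
    (p : ℝ≥0∞) [Fact (1 ≤ p)] (hp' : p ≠ ⊤)
    (φ : ℝ → ℂ) (hφ : MeasureTheory.Integrable φ (volume : Measure ℝ)) :
    ∃ T : LpR p →L[ℂ] LpR p,
      (∀ f : LpR p, (T f : ℝ → ℂ) =ᵐ[volume] fun x =>
        ∫ y : ℝ, φ y * (f : ℝ → ℂ) (x - y)) ∧
      ‖T‖ ≤ (∫ y : ℝ, ‖φ y‖) ∧
      ((∀ᵐ y : ℝ, y < 0 → φ y = 0) →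
        ⇑T ∈ closure ((fun A : LpR p →L[ℂ] LpR p => (A : LpR p → LpR p)) ''
          ((Algebra.adjoin ℂ {S : LpR p →L[ℂ] LpR p | ∃ t : ℝ, 0 ≤ t ∧ IsTransOp p t S} :
            Subalgebra ℂ (LpR p →L[ℂ] LpR p)) : Set (LpR p →L[ℂ] LpR p)))) :=
  ⟨convOp p hp' hφ, convOp_coeFn p hp' hφ, norm_convOp_le p hp' hφ,
    fun hsupp => convOp_mem_closure p hp' hφ hsupp⟩

end
end

section
/- Let φ ∈ L^∞(ℝ) and suppose the multiplication operator M_φ on L^∞(ℝ), (M_φ f)(x) = φ(x)f(x), belongs to the closure in the strong operator topology of the algebra of operators on L^∞(ℝ) generated by {M_λ : λ ≥ 0} and {D_μ : μ ≥ 0}. Then φ belongs to AAP(ℝ), the closure in the uniform (L^∞) norm of the linear span of {x ↦ e^{iλx} : λ ≥ 0}. Consequently, since AAP(ℝ) is a proper subset of H^∞(ℝ), the SOT-closed algebra A_par^∞ generated by these semigroups on L^∞(ℝ) does not contain M_φ for φ ∈ H^∞(ℝ)∖AAP(ℝ). -/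
open MeasureTheory Complex Filter Topology
open scoped ENNReal NNReal

noncomputable section

instance : Fact ((1 : ℝ≥0∞) ≤ ⊤) := ⟨le_top⟩

/-- `φ` (an element of `L^∞(ℝ)`) is, within `ε` in the `L^∞` norm for any `ε > 0`,
a finite linear combination of the analytic exponentials `x ↦ e^{iλx}`, `λ ≥ 0`;
i.e. `φ` agrees a.e. with an element of `AAP(ℝ)`. -/
def MemAAP (φ : LpR ⊤) : Prop :=
  ∀ ε : ℝ, 0 < ε → ∃ (n : ℕ) (c : Fin n → ℂ) (l : Fin n → ℝ),
    (∀ i, 0 ≤ l i) ∧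
    ∀ᵐ x : ℝ, ‖(φ : ℝ → ℂ) x - ∑ i, c i * Complex.exp (Complex.I * (l i) * x)‖ ≤ ε

/-- Auxiliary: `φ : ℝ → ℂ` is approximable in the a.e.-sup norm by analytic
trigonometric polynomials. -/
def AAPapprox (φ : ℝ → ℂ) : Prop :=
  ∀ ε : ℝ, 0 < ε → ∃ (n : ℕ) (c : Fin n → ℂ) (l : Fin n → ℝ),
    (∀ i, 0 ≤ l i) ∧
    ∀ᵐ x : ℝ, ‖φ x - ∑ i, c i * Complex.exp (Complex.I * (l i) * x)‖ ≤ ε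

lemma AAPapprox.congr {φ ψ : ℝ → ℂ} (h : φ =ᵐ[volume] ψ) (hφ : AAPapprox φ) :
    AAPapprox ψ := by
  intro ε hε
  obtain ⟨n, c, l, hl, hb⟩ := hφ ε hε
  exact ⟨n, c, l, hl, by filter_upwards [h, hb] with x hx hbx; rw [← hx]; exact hbx⟩

lemma AAPapprox.const (a : ℂ) : AAPapprox (fun _ => a) := by
  intro ε hε
  refine ⟨1, fun _ => a, fun _ => 0, fun _ => le_refl 0, ?_⟩
  filter_upwards with x
  simp [hε.le]

lemma AAPapprox.add {φ ψ : ℝ → ℂ} (hφ : AAPapprox φ) (hψ : AAPapprox ψ) :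
    AAPapprox (fun x => φ x + ψ x) := by
  intro ε hε
  obtain ⟨n, c, l, hl, hb⟩ := hφ (ε / 2) (by positivity)
  obtain ⟨m, c', l', hl', hb'⟩ := hψ (ε / 2) (by positivity)
  refine ⟨n + m, Fin.append c c', Fin.append l l', ?_, ?_⟩
  · intro i
    refine Fin.addCases (fun j => ?_) (fun j => ?_) i
    · rw [Fin.append_left]; exact hl j
    · rw [Fin.append_right]; exact hl' j
  · filter_upwards [hb, hb'] with x hbx hbx'
    have hsum : ∑ i : Fin (n + m),
        Fin.append c c' i * Complex.exp (Complex.I * (Fin.append l l' i) * x)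
        = (∑ i : Fin n, c i * Complex.exp (Complex.I * (l i) * x))
          + ∑ i : Fin m, c' i * Complex.exp (Complex.I * (l' i) * x) := by
      rw [Fin.sum_univ_add]
      congr 1
      · exact Finset.sum_congr rfl fun j _ => by rw [Fin.append_left, Fin.append_left]
      · exact Finset.sum_congr rfl fun j _ => by rw [Fin.append_right, Fin.append_right]
    rw [hsum]
    calc ‖φ x + ψ x - ((∑ i : Fin n, c i * Complex.exp (Complex.I * (l i) * x))
          + ∑ i : Fin m, c' i * Complex.exp (Complex.I * (l' i) * x))‖
        ≤ ‖φ x - ∑ i : Fin n, c i * Complex.exp (Complex.I * (l i) * x)‖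
          + ‖ψ x - ∑ i : Fin m, c' i * Complex.exp (Complex.I * (l' i) * x)‖ := by
          have : φ x + ψ x - ((∑ i : Fin n, c i * Complex.exp (Complex.I * (l i) * x))
              + ∑ i : Fin m, c' i * Complex.exp (Complex.I * (l' i) * x))
              = (φ x - ∑ i : Fin n, c i * Complex.exp (Complex.I * (l i) * x))
                + (ψ x - ∑ i : Fin m, c' i * Complex.exp (Complex.I * (l' i) * x)) := by ring
          rw [this]; exact norm_add_le _ _
      _ ≤ ε / 2 + ε / 2 := add_le_add hbx hbx'
      _ = ε := by ring

lemma AAPapprox.smul {φ : ℝ → ℂ} (a : ℂ) (hφ : AAPapprox φ) :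
    AAPapprox (fun x => a * φ x) := by
  intro ε hε
  have hpos : (0:ℝ) < ‖a‖ + 1 := by positivity
  obtain ⟨n, c, l, hl, hb⟩ := hφ (ε / (‖a‖ + 1)) (by positivity)
  refine ⟨n, fun i => a * c i, l, hl, ?_⟩
  filter_upwards [hb] with x hbx
  have : a * φ x - ∑ i, a * c i * Complex.exp (Complex.I * (l i) * x)
      = a * (φ x - ∑ i, c i * Complex.exp (Complex.I * (l i) * x)) := by
    rw [mul_sub, Finset.mul_sum]; simp [mul_assoc]
  rw [this, norm_mul]
  calc ‖a‖ * ‖φ x - ∑ i, c i * Complex.exp (Complex.I * (l i) * x)‖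
      ≤ (‖a‖ + 1) * (ε / (‖a‖ + 1)) := by
        apply mul_le_mul (by linarith) hbx (norm_nonneg _) (by linarith)
    _ = ε := by field_simp

lemma norm_exp_I_mul (l x : ℝ) : ‖Complex.exp (Complex.I * l * x)‖ = 1 := by
  have : Complex.I * (l:ℂ) * (x:ℂ) = ((l * x : ℝ) : ℂ) * Complex.I := by push_cast; ring
  rw [this, Complex.norm_exp_ofReal_mul_I]

lemma AAPapprox.mul_exp {φ : ℝ → ℂ} {lam : ℝ} (hlam : 0 ≤ lam) (hφ : AAPapprox φ) :
    AAPapprox (fun x => Complex.exp (Complex.I * lam * x) * φ x) := by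
  intro ε hε
  obtain ⟨n, c, l, hl, hb⟩ := hφ ε hε
  refine ⟨n, c, fun i => lam + l i, fun i => by simpa using add_nonneg hlam (hl i), ?_⟩
  filter_upwards [hb] with x hbx
  have hsum : ∑ i, c i * Complex.exp (Complex.I * ((lam + l i : ℝ)) * x)
      = Complex.exp (Complex.I * lam * x)
        * ∑ i, c i * Complex.exp (Complex.I * (l i) * x) := by
    rw [Finset.mul_sum]
    refine Finset.sum_congr rfl fun i _ => ?_
    rw [show Complex.I * ((lam + l i : ℝ)) * x
        = Complex.I * lam * x + Complex.I * (l i) * x by push_cast; ring,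
      Complex.exp_add]
    ring
  rw [hsum, show Complex.exp (Complex.I * lam * x) * φ x
      - Complex.exp (Complex.I * lam * x) * ∑ i, c i * Complex.exp (Complex.I * (l i) * x)
      = Complex.exp (Complex.I * lam * x)
        * (φ x - ∑ i, c i * Complex.exp (Complex.I * (l i) * x)) by ring,
    norm_mul, norm_exp_I_mul, one_mul]
  exact hbx

lemma AAPapprox.translate {φ : ℝ → ℂ} (m : ℝ) (hφ : AAPapprox φ) :
    AAPapprox (fun x => φ (x - m)) := by
  intro ε hε
  obtain ⟨n, c, l, hl, hb⟩ := hφ ε hε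
  refine ⟨n, fun i => c i * Complex.exp (-(Complex.I * (l i) * m)), l, hl, ?_⟩
  have hb' : ∀ᵐ x : ℝ, ‖φ (x - m)
      - ∑ i, c i * Complex.exp (Complex.I * (l i) * (((x - m : ℝ) : ℂ)))‖ ≤ ε :=
    ((measurePreserving_sub_right volume m).quasiMeasurePreserving.tendsto_ae).eventually hb
  filter_upwards [hb'] with x hbx
  have hsum : ∑ i, c i * Complex.exp (-(Complex.I * (l i) * m))
        * Complex.exp (Complex.I * (l i) * x)
      = ∑ i, c i * Complex.exp (Complex.I * (l i) * (((x - m : ℝ) : ℂ))) := by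
    refine Finset.sum_congr rfl fun i _ => ?_
    rw [mul_assoc, ← Complex.exp_add]
    congr 1
    push_cast
    ring_nf
  rw [hsum]
  exact hbx

lemma ae_norm_sub_le_of_norm_le {g h : LpR ⊤} {δ : ℝ} (hd : ‖g - h‖ ≤ δ) :
    ∀ᵐ x : ℝ, ‖(g : ℝ → ℂ) x - (h : ℝ → ℂ) x‖ ≤ δ := by
  have h1 : ∀ᵐ x : ℝ, ‖((g - h : LpR ⊤) : ℝ → ℂ) x‖ ≤ δ := by
    have hlt : eLpNorm ((g - h : LpR ⊤) : ℝ → ℂ) ⊤ volume < ⊤ :=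
      MeasureTheory.Lp.eLpNorm_lt_top _
    have hnorm : ‖(g - h : LpR ⊤)‖
        = (eLpNormEssSup ((g - h : LpR ⊤) : ℝ → ℂ) volume).toReal := by
      rw [MeasureTheory.Lp.norm_def, eLpNorm_exponent_top]
    filter_upwards [MeasureTheory.ae_le_eLpNormEssSup
      (f := ((g - h : LpR ⊤) : ℝ → ℂ)) (μ := volume)] with x hx
    have hx' : (‖((g - h : LpR ⊤) : ℝ → ℂ) x‖₊ : ℝ≥0∞).toReal
        ≤ (eLpNormEssSup ((g - h : LpR ⊤) : ℝ → ℂ) volume).toReal := by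
      apply ENNReal.toReal_mono _ hx
      rw [← eLpNorm_exponent_top]
      exact hlt.ne
    simpa [hnorm] using hx'.trans (by rw [← hnorm]; exact hd)
  filter_upwards [h1, MeasureTheory.Lp.coeFn_sub g h] with x hx hsub
  rw [hsub] at hx
  simpa using hx

/-- The key subalgebra: operators preserving a.e.-AAP-approximability. -/
def aapAlgebra : Subalgebra ℂ (LpR ⊤ →L[ℂ] LpR ⊤) where
  carrier := {T | ∀ f : LpR ⊤, AAPapprox (f : ℝ → ℂ) → AAPapprox ((T f : LpR ⊤) : ℝ → ℂ)}
  mul_mem' := by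
    intro a b ha hb f hf
    rw [ContinuousLinearMap.mul_apply]
    exact ha _ (hb _ hf)
  one_mem' := by
    intro f hf
    rw [ContinuousLinearMap.one_apply]
    exact hf
  add_mem' := by
    intro a b ha hb f hf
    have : ((a + b) f : ℝ → ℂ) =ᵐ[volume]
        fun x => ((a f : LpR ⊤) : ℝ → ℂ) x + ((b f : LpR ⊤) : ℝ → ℂ) x := by
      rw [ContinuousLinearMap.add_apply]
      filter_upwards [MeasureTheory.Lp.coeFn_add (a f) (b f)] with x hx using hx
    exact AAPapprox.congr this.symm ((ha _ hf).add (hb _ hf))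
  zero_mem' := by
    intro f hf
    have : (((0 : LpR ⊤ →L[ℂ] LpR ⊤) f : LpR ⊤) : ℝ → ℂ) =ᵐ[volume] fun _ => (0 : ℂ) := by
      rw [ContinuousLinearMap.zero_apply]
      exact MeasureTheory.Lp.coeFn_zero ℂ ⊤ volume
    exact AAPapprox.congr this.symm (AAPapprox.const 0)
  algebraMap_mem' := by
    intro r f hf
    have h1 : (algebraMap ℂ (LpR ⊤ →L[ℂ] LpR ⊤) r) f = r • f := by
      rw [Algebra.algebraMap_eq_smul_one]
      rw [ContinuousLinearMap.smul_apply, ContinuousLinearMap.one_apply]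
    have : (((algebraMap ℂ (LpR ⊤ →L[ℂ] LpR ⊤) r) f : LpR ⊤) : ℝ → ℂ) =ᵐ[volume]
        fun x => r * (f : ℝ → ℂ) x := by
      rw [h1]
      filter_upwards [MeasureTheory.Lp.coeFn_smul r f] with x hx
      simpa [smul_eq_mul] using hx
    exact AAPapprox.congr this.symm (hf.smul r)

lemma aapAlgebra_mem_family :
    (aapAlgebra : Set (LpR ⊤ →L[ℂ] LpR ⊤)) ∈
      {S | parabolicGens ⊤ ⊆ S ∧ IsSOTClosed ⊤ S ∧
        ∃ A : Subalgebra ℂ (LpR ⊤ →L[ℂ] LpR ⊤), (A : Set (LpR ⊤ →L[ℂ] LpR ⊤)) = S} := by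
  refine ⟨?_, ?_, aapAlgebra, rfl⟩
  · rintro T (⟨lam, hlam, hT⟩ | ⟨m, hm, hT⟩) <;> intro f hf
    · exact AAPapprox.congr (hT f).symm (hf.mul_exp hlam)
    · exact AAPapprox.congr (hT f).symm (hf.translate m)
  · intro T hT f hf
    -- limit argument
    intro ε hε
    -- find A in the algebra with ‖A f - T f‖ small
    have hball : ∃ A : LpR ⊤ →L[ℂ] LpR ⊤, A ∈ (aapAlgebra : Set (LpR ⊤ →L[ℂ] LpR ⊤)) ∧
        ‖A f - T f‖ ≤ ε / 2 := by
      have hopen : IsOpen {g : LpR ⊤ → LpR ⊤ | g f ∈ Metric.ball (T f) (ε / 2)} :=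
        Metric.isOpen_ball.preimage (continuous_apply f)
      have hmem : ⇑T ∈ {g : LpR ⊤ → LpR ⊤ | g f ∈ Metric.ball (T f) (ε / 2)} := by
        simp [Metric.mem_ball, hε, half_pos hε]
      obtain ⟨g, hgball, hgim⟩ := mem_closure_iff.mp hT _ hopen hmem
      obtain ⟨A, hA, rfl⟩ := hgim
      refine ⟨A, hA, ?_⟩
      have := Metric.mem_ball.mp hgball
      rw [dist_eq_norm] at this
      exact this.le
    obtain ⟨A, hA, hAT⟩ := hball
    obtain ⟨n, c, l, hl, hb⟩ := hA f hf (ε / 2) (half_pos hε)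
    refine ⟨n, c, l, hl, ?_⟩
    have hae : ∀ᵐ x : ℝ, ‖((A f : LpR ⊤) : ℝ → ℂ) x - ((T f : LpR ⊤) : ℝ → ℂ) x‖ ≤ ε / 2 :=
      ae_norm_sub_le_of_norm_le hAT
    filter_upwards [hb, hae] with x hbx hax
    calc ‖((T f : LpR ⊤) : ℝ → ℂ) x - ∑ i, c i * Complex.exp (Complex.I * (l i) * x)‖
        ≤ ‖((T f : LpR ⊤) : ℝ → ℂ) x - ((A f : LpR ⊤) : ℝ → ℂ) x‖
          + ‖((A f : LpR ⊤) : ℝ → ℂ) x - ∑ i, c i * Complex.exp (Complex.I * (l i) * x)‖ :=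
          norm_sub_le_norm_sub_add_norm_sub _ _ _
      _ ≤ ε / 2 + ε / 2 := add_le_add (by rw [norm_sub_rev]; exact hax) hbx
      _ = ε := by ring

/-- If the multiplication operator `M_φ` on `L^∞(ℝ)` belongs to the
SOT-closed algebra generated by `{M_λ : λ ≥ 0}` and `{D_μ : μ ≥ 0}` then `φ ∈ AAP(ℝ)`;
consequently `M_φ ∉ A_par^∞` whenever `φ ∉ AAP(ℝ)` (in particular for
`φ ∈ H^∞(ℝ) \ AAP(ℝ)`). -/

theorem mul_in_parabolicAlgebra_top_implies_AAP :
    (∀ (φ : LpR ⊤) (T : LpR ⊤ →L[ℂ] LpR ⊤),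
      IsMulOp ⊤ (φ : ℝ → ℂ) T → T ∈ parabolicAlgebra ⊤ → MemAAP φ) ∧
    (∀ (φ : LpR ⊤) (T : LpR ⊤ →L[ℂ] LpR ⊤),
      IsMulOp ⊤ (φ : ℝ → ℂ) T → ¬ MemAAP φ → T ∉ parabolicAlgebra ⊤) := by
  have key : ∀ (φ : LpR ⊤) (T : LpR ⊤ →L[ℂ] LpR ⊤),
      IsMulOp ⊤ (φ : ℝ → ℂ) T → T ∈ parabolicAlgebra ⊤ → MemAAP φ := by
    intro φ T hmul hT
    have hTmem : T ∈ (aapAlgebra : Set (LpR ⊤ →L[ℂ] LpR ⊤)) :=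
      hT _ aapAlgebra_mem_family
    set one : LpR ⊤ := (MeasureTheory.memLp_top_const (1 : ℂ)).toLp (fun _ : ℝ => (1 : ℂ))
    have hone : (one : ℝ → ℂ) =ᵐ[volume] fun _ => (1 : ℂ) :=
      (MeasureTheory.memLp_top_const (1 : ℂ)).coeFn_toLp
    have honeA : AAPapprox (one : ℝ → ℂ) :=
      AAPapprox.congr hone.symm (AAPapprox.const 1)
    have hTone : AAPapprox ((T one : LpR ⊤) : ℝ → ℂ) := hTmem one honeA
    have heq : ((T one : LpR ⊤) : ℝ → ℂ) =ᵐ[volume] (φ : ℝ → ℂ) := by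
      filter_upwards [hmul one, hone] with x hx h1
      rw [hx, h1, mul_one]
    exact AAPapprox.congr heq hTone
  exact ⟨key, fun φ T hmul hAAP hT => hAAP (key φ T hmul hT)⟩

end
end
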